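/- Let n be a positive integer and let U(x) = Σ_{i=1}^n Σ_{j=1}^n x_{ij} log x_{ij}. Then U is (1/n)-strongly convex with respect to the ℓ1 norm on the set of doubly stochastic n×n matrices with strictly positive entries: for all doubly stochastic matrices x, y with strictly positive entries, U(y) ≥ U(x) + Σ_{i,j} (log x_{ij} + 1)(y_{ij} − x_{ij}) + (1/(2n)) · (Σ_{i,j} |y_{ij} − x_{ij}|)². -/

import Mathlib

open Real
open Real

lemma logA {t : ℝ} (ht : 1 ≤ t) : 2*(t-1)/(t+1) ≤ Real.log t := by
  have ht0 : (0:ℝ) < t := lt_of_lt_of_le one_pos ht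
  have key : MonotoneOn (fun s : ℝ => Real.log s + 4/(s+1)) (Set.Ici 1) := by
    apply monotoneOn_of_hasDerivWithinAt_nonneg (convex_Ici 1)
      (f' := fun s => 1/s - 4/(s+1)^2)
    · apply ContinuousOn.add
      · exact fun s hs => (Real.continuousAt_log (by simp at hs; linarith)).continuousWithinAt
      · apply ContinuousOn.div continuousOn_const (by fun_prop)
        intro s hs; simp at hs; positivity
    · intro s hs
      rw [interior_Ici] at hs
      simp only [Set.mem_Ioi] at hs
      have hs0 : (0:ℝ) < s := by linarith
      have h1 : HasDerivAt (fun s : ℝ => Real.log s + 4/(s+1)) (1/s - 4/(s+1)^2) s := by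
        have hl := Real.hasDerivAt_log hs0.ne'
        have h2 : HasDerivAt (fun s : ℝ => 4*(s+1)⁻¹) (4*(-1/((s+1)^2))) s := by
          have h3 : HasDerivAt (fun s : ℝ => s + 1) 1 s := (hasDerivAt_id s).add_const 1
          exact (h3.inv (by positivity)).const_mul 4
        have := hl.add h2
        simp only [div_eq_mul_inv] at *
        exact this.congr_deriv (by ring)
      exact (h1.hasDerivWithinAt).mono interior_subset
    · intro s hs
      rw [interior_Ici] at hs
      simp only [Set.mem_Ioi] at hs
      have hs0 : (0:ℝ) < s := by linarith
      have : (0:ℝ) ≤ (s-1)^2 := sq_nonneg _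
      rw [sub_nonneg, div_le_div_iff₀ (by positivity) hs0]
      nlinarith
  have := key (Set.mem_Ici.2 le_rfl) (Set.mem_Ici.2 ht) ht
  simp only [Real.log_one] at this
  have h1 : (0:ℝ) < t + 1 := by linarith
  rw [div_le_iff₀ h1]
  nlinarith [this, div_mul_cancel₀ (4:ℝ) h1.ne']


lemma logB_ge {t : ℝ} (ht : 1 ≤ t) : 2*(t-1) ≤ (t+1) * Real.log t := by
  have h1 : (0:ℝ) < t + 1 := by linarith
  have := logA ht
  rw [div_le_iff₀ h1] at this
  linarith [this]

lemma logB_le {t : ℝ} (ht0 : 0 < t) (ht : t ≤ 1) : (t+1) * Real.log t ≤ 2*(t-1) := by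
  have h1 : (1:ℝ) ≤ 1/t := by rw [le_div_iff₀ ht0]; linarith
  have := logA h1
  have e : 2*(1/t-1)/(1/t+1) = 2*(1-t)/(1+t) := by
    rw [div_eq_div_iff (by positivity) (by positivity)]
    field_simp
  rw [e, one_div, Real.log_inv] at this
  have h2 : (0:ℝ) < 1 + t := by linarith
  rw [div_le_iff₀ h2] at this
  nlinarith [this]

-- h(t) = 2*(t+2)*(t*log t - t + 1) - 3*(t-1)^2, h' = 4*((t+1)*log t - 2*(t-1))
lemma hDeriv {t : ℝ} (ht : 0 < t) :
    HasDerivAt (fun s : ℝ => 2*(s+2)*(s*Real.log s - s + 1) - 3*(s-1)^2)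
      (4*((t+1)*Real.log t - 2*(t-1))) t := by
  have h1 : HasDerivAt (fun s : ℝ => s * Real.log s) (Real.log t + 1) t :=
    Real.hasDerivAt_mul_log ht.ne'
  have h2 : HasDerivAt (fun s : ℝ => s*Real.log s - s + 1) (Real.log t + 1 - 1) t :=
    (h1.sub (hasDerivAt_id t)).add_const 1
  have h3 : HasDerivAt (fun s : ℝ => 2*(s+2)) 2 t := by
    simpa using ((hasDerivAt_id t).add_const 2).const_mul 2
  have h4 := h3.mul h2
  have h5 : HasDerivAt (fun s : ℝ => 3*(s-1)^2) (3*(2*(t-1))) t := by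
    simpa using (((hasDerivAt_id t).sub_const 1).pow 2).const_mul 3
  have := h4.sub h5
  exact this.congr_deriv (by ring)

lemma scalar_key {t : ℝ} (ht : 0 < t) : 3*(t-1)^2 ≤ 2*(t+2)*(t*Real.log t - t + 1) := by
  set h : ℝ → ℝ := fun s => 2*(s+2)*(s*Real.log s - s + 1) - 3*(s-1)^2 with hh
  have h1 : h 1 = 0 := by simp [hh]
  have hcont : ContinuousOn h (Set.Ioi 0) := by
    apply ContinuousOn.sub
    · apply ContinuousOn.mul (by fun_prop)
      apply ContinuousOn.add (ContinuousOn.sub (ContinuousOn.mul continuousOn_id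
        (fun s hs => (Real.continuousAt_log (ne_of_gt hs)).continuousWithinAt)) continuousOn_id)
        continuousOn_const
    · fun_prop
  rcases le_or_gt 1 t with hc | hc
  · -- monotone on Ici 1
    have key : MonotoneOn h (Set.Ici 1) := by
      apply monotoneOn_of_hasDerivWithinAt_nonneg (convex_Ici 1)
        (hcont.mono (by intro s hs; simp at hs ⊢; linarith))
        (f' := fun s => 4*((s+1)*Real.log s - 2*(s-1)))
      · intro s hs
        rw [interior_Ici] at hs
        exact (hDeriv (by simp at hs; linarith)).hasDerivWithinAt.mono interior_subset
      · intro s hs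
        rw [interior_Ici] at hs
        simp only [Set.mem_Ioi] at hs
        have := logB_ge hs.le
        linarith
    have := key (Set.mem_Ici.2 le_rfl) (Set.mem_Ici.2 hc) hc
    rw [h1] at this
    simpa [hh] using this
  · -- antitone on Ioc 0 1
    have key : AntitoneOn h (Set.Ioc 0 1) := by
      apply antitoneOn_of_hasDerivWithinAt_nonpos (convex_Ioc 0 1)
        (hcont.mono (by intro s hs; simp at hs ⊢; linarith [hs.1]))
        (f' := fun s => 4*((s+1)*Real.log s - 2*(s-1)))
      · intro s hs
        rw [interior_Ioc] at hs
        exact (hDeriv hs.1).hasDerivWithinAt.mono interior_subset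
      · intro s hs
        rw [interior_Ioc] at hs
        have := logB_le hs.1 hs.2.le
        linarith
    have := key (Set.mem_Ioc.2 ⟨ht, hc.le⟩) (Set.mem_Ioc.2 ⟨one_pos, le_rfl⟩) hc.le
    rw [h1] at this
    simpa [hh] using this


lemma pointwise_div {a b : ℝ} (ha : 0 < a) (hb : 0 < b) :
    (b-a)^2 / ((b + 2*a)/3) ≤ 2*(b*Real.log b - b*Real.log a - b + a) := by
  have key := scalar_key (div_pos hb ha)
  rw [Real.log_div hb.ne' ha.ne'] at key
  have h2 := mul_le_mul_of_nonneg_left key (le_of_lt (mul_pos ha ha))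
  have e1 : a*a*(3*(b/a-1)^2) = 3*(b-a)^2 := by field_simp
  have e2 : a*a*(2*(b/a+2)*((b/a)*(Real.log b - Real.log a) - b/a + 1))
      = 2*(b+2*a)*(b*Real.log b - b*Real.log a - b + a) := by field_simp
  rw [e1, e2] at h2
  rw [div_le_iff₀ (by positivity : (0:ℝ) < (b+2*a)/3)]
  nlinarith [h2]

lemma pointwise_nonneg {a b : ℝ} (ha : 0 < a) (hb : 0 < b) :
    0 ≤ b*Real.log b - b*Real.log a - b + a := by
  have := pointwise_div ha hb
  have h0 : (0:ℝ) ≤ (b-a)^2 / ((b + 2*a)/3) := by positivity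
  linarith


/-- A doubly stochastic `n × n` matrix: entries in `[0,1]`, all row sums and
column sums equal to `1`. -/
def DoublyStochastic (n : ℕ) (x : Fin n → Fin n → ℝ) : Prop :=
  (∀ i j, 0 ≤ x i j) ∧ (∀ i j, x i j ≤ 1) ∧
  (∀ i, ∑ j, x i j = 1) ∧ (∀ j, ∑ i, x i j = 1)

/-- the negative entropy `U(x) = ∑ x_{ij} log x_{ij}` is
`(1/n)`-strongly convex with respect to the ℓ1 norm on the set of doubly
stochastic matrices with strictly positive entries. -/
theorem entropy_strongly_convex_l1
    (n : ℕ) (hn : 0 < n) (x y : Fin n → Fin n → ℝ)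
    (hx : DoublyStochastic n x) (hy : DoublyStochastic n y)
    (hxpos : ∀ i j, 0 < x i j) (hypos : ∀ i j, 0 < y i j) :
    (∑ i, ∑ j, x i j * Real.log (x i j))
      + (∑ i, ∑ j, (Real.log (x i j) + 1) * (y i j - x i j))
      + (1 / (2 * (n : ℝ))) * (∑ i, ∑ j, |y i j - x i j|) ^ 2
    ≤ ∑ i, ∑ j, y i j * Real.log (y i j) := by
  have hnR : (0:ℝ) < n := Nat.cast_pos.2 hn
  -- total sums
  have hxs : ∑ i, ∑ j, x i j = (n:ℝ) := by
    simp [hx.2.2.1]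
  have hys : ∑ i, ∑ j, y i j = (n:ℝ) := by
    simp [hy.2.2.1]
  -- linear part identity
  have hlin : (∑ i, ∑ j, x i j * Real.log (x i j))
      + (∑ i, ∑ j, (Real.log (x i j) + 1) * (y i j - x i j))
      = ∑ i, ∑ j, y i j * Real.log (x i j) := by
    have e : ∀ i j : Fin n, (Real.log (x i j) + 1) * (y i j - x i j)
        = y i j * Real.log (x i j) - x i j * Real.log (x i j) + (y i j - x i j) := by
      intro i j; ring
    simp_rw [e, Finset.sum_add_distrib, Finset.sum_sub_distrib]
    rw [hxs, hys]
    ring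
  -- KL with pointwise divergence over the product type
  set D : Fin n × Fin n → ℝ := fun p =>
    y p.1 p.2 * Real.log (y p.1 p.2) - y p.1 p.2 * Real.log (x p.1 p.2)
      - y p.1 p.2 + x p.1 p.2 with hD
  set w : Fin n × Fin n → ℝ := fun p => (y p.1 p.2 + 2 * x p.1 p.2) / 3 with hw
  have hwpos : ∀ p ∈ (Finset.univ : Finset (Fin n × Fin n)), 0 < w p := by
    intro p _; have := hxpos p.1 p.2; have := hypos p.1 p.2; simp only [hw]; positivity
  have hsw : ∑ p : Fin n × Fin n, w p = (n:ℝ) := by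
    rw [hw, Fintype.sum_prod_type]
    have e : ∀ i : Fin n, ∑ j, (y i j + 2 * x i j)/3 = 1 := by
      intro i
      rw [← Finset.sum_div, Finset.sum_add_distrib, ← Finset.mul_sum, hx.2.2.1, hy.2.2.1]
      norm_num
    simp [e]
  have hCS := Finset.sq_sum_div_le_sum_sq_div (Finset.univ : Finset (Fin n × Fin n))
    (fun p => |y p.1 p.2 - x p.1 p.2|) hwpos
  have hptw : ∀ p : Fin n × Fin n,
      |y p.1 p.2 - x p.1 p.2| ^ 2 / w p ≤ 2 * D p := by
    intro p
    rw [sq_abs]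
    exact pointwise_div (hxpos p.1 p.2) (hypos p.1 p.2)
  have hKL : (∑ p : Fin n × Fin n, |y p.1 p.2 - x p.1 p.2|) ^ 2
      ≤ 2 * (n:ℝ) * ∑ p : Fin n × Fin n, D p := by
    rw [hsw] at hCS
    have h2 : ∑ p : Fin n × Fin n, |y p.1 p.2 - x p.1 p.2| ^ 2 / w p
        ≤ ∑ p : Fin n × Fin n, 2 * D p := Finset.sum_le_sum fun p _ => hptw p
    rw [← Finset.mul_sum] at h2
    calc (∑ p : Fin n × Fin n, |y p.1 p.2 - x p.1 p.2|) ^ 2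
        = ((∑ p : Fin n × Fin n, |y p.1 p.2 - x p.1 p.2|) ^ 2 / (n:ℝ)) * n := by
          field_simp
      _ ≤ (2 * ∑ p : Fin n × Fin n, D p) * n := by
          apply mul_le_mul_of_nonneg_right (le_trans hCS h2) hnR.le
      _ = 2 * (n:ℝ) * ∑ p : Fin n × Fin n, D p := by ring
  -- rewrite sums over product
  have habs : ∑ p : Fin n × Fin n, |y p.1 p.2 - x p.1 p.2|
      = ∑ i, ∑ j, |y i j - x i j| := Fintype.sum_prod_type _
  have hDval : ∑ p : Fin n × Fin n, D p
      = (∑ i, ∑ j, y i j * Real.log (y i j)) - ∑ i, ∑ j, y i j * Real.log (x i j) := by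
    rw [hD]
    rw [Fintype.sum_prod_type]
    simp only [Finset.sum_sub_distrib, Finset.sum_add_distrib]
    rw [hxs, hys]
    ring
  rw [habs, hDval] at hKL
  rw [hlin]
  have : (1 / (2 * (n:ℝ))) * (∑ i, ∑ j, |y i j - x i j|) ^ 2
      ≤ (∑ i, ∑ j, y i j * Real.log (y i j)) - ∑ i, ∑ j, y i j * Real.log (x i j) := by
    rw [div_mul_eq_mul_div, one_mul, div_le_iff₀ (by positivity)]
    linarith [hKL]
  linarith
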